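/- Let Y ⊆ ℝ^d be compact, X ⊆ Y nonempty compact, and f : Y → ℝ satisfy |f(x) − f(y)| ≤ L‖x−y‖^α for all x,y ∈ Y with L ≥ 0 and α ∈ (0,1]. Suppose dist(x,X) ≤ c·max_{i∈I}[f_i(x)]_+ on Y (metric regularity with constant c), where X = {x∈Y : f_i(x) ≤ 0 ∀i}, and let X_γ := {x∈Y : f_i(x) ≤ γ ∀i} for γ > 0. Then 0 ≤ Gap(γ) := min_X f − min_{X_γ} f ≤ L (cγ)^α. Moreover, if there exists a minimizer of f over X_γ that belongs to X, then Gap(γ) = 0. -/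

import Mathlib

/-- Exterior optimality error: for an `α`-Hölder objective with constant `L` and a
metric regular feasible set with constant `c`,
`0 ≤ Gap(γ) := min_X f − min_{X_γ} f ≤ L (cγ)^α`, and `Gap(γ) = 0` as soon as some
minimizer of `f` over `X_γ` lies in `X`. -/
theorem stmt_7 {d : ℕ} {ι : Type*} [Fintype ι]
    (Y : Set (EuclideanSpace ℝ (Fin d))) (hY : IsCompact Y)
    (f : EuclideanSpace ℝ (Fin d) → ℝ) (fI : ι → EuclideanSpace ℝ (Fin d) → ℝ)
    (hfIc : ∀ i, ContinuousOn (fI i) Y)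
    (L α : ℝ) (hL : 0 ≤ L) (hα0 : 0 < α) (hα1 : α ≤ 1)
    (hHol : ∀ x ∈ Y, ∀ y ∈ Y, |f x - f y| ≤ L * ‖x - y‖ ^ α)
    (c : ℝ) (hc : 0 < c)
    (hXne : {x ∈ Y | ∀ i, fI i x ≤ 0}.Nonempty)
    (hmr : ∀ x ∈ Y, Metric.infDist x {x ∈ Y | ∀ i, fI i x ≤ 0} ≤ c * ⨆ i, max (fI i x) 0)
    (γ : ℝ) (hγ : 0 < γ) :
    0 ≤ sInf (f '' {x ∈ Y | ∀ i, fI i x ≤ 0}) - sInf (f '' {x ∈ Y | ∀ i, fI i x ≤ γ}) ∧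
    sInf (f '' {x ∈ Y | ∀ i, fI i x ≤ 0}) - sInf (f '' {x ∈ Y | ∀ i, fI i x ≤ γ}) ≤
      L * (c * γ) ^ α ∧
    ((∃ xm ∈ {x ∈ Y | ∀ i, fI i x ≤ γ},
        (∀ z ∈ {x ∈ Y | ∀ i, fI i x ≤ γ}, f xm ≤ f z) ∧ ∀ i, fI i xm ≤ 0) →
      sInf (f '' {x ∈ Y | ∀ i, fI i x ≤ 0}) = sInf (f '' {x ∈ Y | ∀ i, fI i x ≤ γ})) := by
  set X : Set (EuclideanSpace ℝ (Fin d)) := {x ∈ Y | ∀ i, fI i x ≤ 0} with hXdef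
  set Xγ : Set (EuclideanSpace ℝ (Fin d)) := {x ∈ Y | ∀ i, fI i x ≤ γ} with hXγdef
  have hXsubY : X ⊆ Y := fun x hx => hx.1
  have hXγsubY : Xγ ⊆ Y := fun x hx => hx.1
  have hXXγ : X ⊆ Xγ := fun x hx => ⟨hx.1, fun i => (hx.2 i).trans hγ.le⟩
  have hXγne : Xγ.Nonempty := hXne.mono hXXγ
  -- closedness / compactness of the sublevel sets
  have hclosed : ∀ t : ℝ, IsClosed {x ∈ Y | ∀ i, fI i x ≤ t} := by
    intro t
    have : {x ∈ Y | ∀ i, fI i x ≤ t} = Y ∩ ⋂ i, Y ∩ (fI i) ⁻¹' Set.Iic t := by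
      ext x
      simp only [Set.mem_sep_iff, Set.mem_inter_iff, Set.mem_iInter, Set.mem_preimage,
        Set.mem_Iic]
      constructor
      · exact fun ⟨h1, h2⟩ => ⟨h1, fun i => ⟨h1, h2 i⟩⟩
      · exact fun ⟨h1, h2⟩ => ⟨h1, fun i => (h2 i).2⟩
    rw [this]
    exact hY.isClosed.inter (isClosed_iInter fun i =>
      (hfIc i).preimage_isClosed_of_isClosed hY.isClosed isClosed_Iic)
  have hXc : IsCompact X := hY.of_isClosed_subset (hclosed 0) hXsubY
  have hXγc : IsCompact Xγ := hY.of_isClosed_subset (hclosed γ) hXγsubY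
  -- continuity of f on Y
  have hfc : ContinuousOn f Y := by
    intro x hx
    rw [ContinuousWithinAt, tendsto_iff_dist_tendsto_zero]
    have hbound : ∀ y ∈ Y, dist (f y) (f x) ≤ L * dist y x ^ α := by
      intro y hy
      have := hHol y hy x hx
      rw [Real.dist_eq, dist_eq_norm]; exact this
    have htend : Filter.Tendsto (fun y => L * dist y x ^ α) (nhdsWithin x Y) (nhds 0) := by
      have h1 : Filter.Tendsto (fun y => dist y x) (nhdsWithin x Y) (nhds 0) := by
        have hcont : Continuous (fun y : EuclideanSpace ℝ (Fin d) => dist y x) :=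
          continuous_id.dist continuous_const
        have := hcont.tendsto x
        simp only [dist_self] at this
        exact this.mono_left nhdsWithin_le_nhds
      have h2 : Filter.Tendsto (fun t : ℝ => L * t ^ α) (nhds 0) (nhds (L * (0:ℝ) ^ α)) := by
        exact (Filter.Tendsto.mul tendsto_const_nhds
          ((Real.continuousAt_rpow_const 0 α (Or.inr hα0.le)).tendsto))
      have := h2.comp h1
      rwa [Real.zero_rpow hα0.ne', mul_zero] at this
    refine squeeze_zero' ?_ ?_ htend
    · exact Filter.Eventually.of_forall fun y => dist_nonneg
    · exact eventually_nhdsWithin_of_forall hbound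
  -- basic facts about the infima
  have hbddγ : BddBelow (f '' Xγ) := (hXγc.image_of_continuousOn (hfc.mono hXγsubY)).bddBelow
  have hbdd0 : BddBelow (f '' X) := (hXc.image_of_continuousOn (hfc.mono hXsubY)).bddBelow
  have hmono : sInf (f '' Xγ) ≤ sInf (f '' X) :=
    csInf_le_csInf hbddγ (hXne.image f) (Set.image_mono (f := f) hXXγ)
  -- minimizer over Xγ
  obtain ⟨xs, hxsXγ, hxsmin⟩ := hXγc.exists_isMinOn hXγne (hfc.mono hXγsubY)
  have hsInfγ : sInf (f '' Xγ) = f xs := by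
    refine le_antisymm (csInf_le hbddγ ⟨xs, hxsXγ, rfl⟩) ?_
    refine le_csInf (hXγne.image f) ?_
    rintro b ⟨z, hz, rfl⟩
    exact hxsmin hz
  have key : ∀ xm ∈ Xγ, Metric.infDist xm X ≤ c * γ := by
    intro xm hxm
    have hsup : (⨆ i, max (fI i xm) 0) ≤ γ := by
      rcases isEmpty_or_nonempty ι with h | h
      · rw [Real.iSup_of_isEmpty]; exact hγ.le
      · exact ciSup_le fun i => max_le (hxm.2 i) hγ.le
    calc Metric.infDist xm X ≤ c * ⨆ i, max (fI i xm) 0 := hmr xm (hXγsubY hxm)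
      _ ≤ c * γ := mul_le_mul_of_nonneg_left hsup hc.le
  -- part 2
  have hpart2 : sInf (f '' X) - sInf (f '' Xγ) ≤ L * (c * γ) ^ α := by
    obtain ⟨y, hyX, hyd⟩ := hXc.exists_infDist_eq_dist hXne xs
    have hdist : dist xs y ≤ c * γ := hyd ▸ key xs hxsXγ
    have h1 : sInf (f '' X) ≤ f y := csInf_le hbdd0 ⟨y, hyX, rfl⟩
    have h2 : f y - f xs ≤ L * (c * γ) ^ α := by
      have := hHol y (hXsubY hyX) xs (hXγsubY hxsXγ)
      have hle : ‖y - xs‖ ^ α ≤ (c * γ) ^ α := by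
        apply Real.rpow_le_rpow (norm_nonneg _) _ hα0.le
        rw [← dist_eq_norm, dist_comm]; exact hdist
      calc f y - f xs ≤ |f y - f xs| := le_abs_self _
        _ ≤ L * ‖y - xs‖ ^ α := this
        _ ≤ L * (c * γ) ^ α := mul_le_mul_of_nonneg_left hle hL
    rw [hsInfγ]; linarith
  refine ⟨by linarith, hpart2, ?_⟩
  rintro ⟨xm, hxmXγ, hxmmin, hxmX⟩
  have hxmX' : xm ∈ X := ⟨hXγsubY hxmXγ, hxmX⟩
  have h1 : sInf (f '' X) ≤ f xm := csInf_le hbdd0 ⟨xm, hxmX', rfl⟩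
  have h2 : sInf (f '' Xγ) = f xm := by
    refine le_antisymm (csInf_le hbddγ ⟨xm, hxmXγ, rfl⟩) ?_
    refine le_csInf (hXγne.image f) ?_
    rintro b ⟨z, hz, rfl⟩
    exact hxmmin z hz
  linarith
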